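/- arXiv:1109.4912 — 4 statements merged into one kernel-verified Lean document; each statement's English description precedes it below -/
import Mathlib

section
/- Let B be a finite-dimensional unital associative K-algebra and let A be an F-subalgebra of B. If I is a left ideal of A, then cl(I) is a left ideal of cl(A); and if I is a two-sided ideal of A, then cl(I) is a two-sided ideal of cl(A). -/
/-- The Zariski closure of a subset `A` of a finite-dimensional `K`-vector space `B`,
with respect to the coordinates given by the fixed basis `β`. -/
def zcl {K B : Type*} [Field K] [AddCommGroup B] [Module K B] {n : ℕ}
    (β : Module.Basis (Fin n) K B) (A : Set B) : Set B :=
  {x | ∀ f : MvPolynomial (Fin n) K,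
    (∀ a ∈ A, MvPolynomial.eval (fun i => β.repr a i) f = 0) →
      MvPolynomial.eval (fun i => β.repr x i) f = 0}

lemma subset_zcl {K B : Type*} [Field K] [AddCommGroup B] [Module K B] {n : ℕ}
    (β : Module.Basis (Fin n) K B) (S : Set B) : S ⊆ zcl β S :=
  fun s hs f hf => hf s hs

lemma zcl_mono {K B : Type*} [Field K] [AddCommGroup B] [Module K B] {n : ℕ}
    (β : Module.Basis (Fin n) K B) {S T : Set B} (h : S ⊆ T) : zcl β S ⊆ zcl β T :=
  fun x hx f hf => hx f (fun a ha => hf a (h ha))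

lemma zcl_idem {K B : Type*} [Field K] [AddCommGroup B] [Module K B] {n : ℕ}
    (β : Module.Basis (Fin n) K B) (S : Set B) : zcl β (zcl β S) ⊆ zcl β S :=
  fun x hx f hf => hx f (fun a ha => ha f hf)

/-- An affine map `y ↦ c + L y` taking `S` into `T` takes `zcl S` into `zcl T`. -/
lemma zcl_affine {K B : Type*} [Field K] [AddCommGroup B] [Module K B] {n : ℕ}
    (β : Module.Basis (Fin n) K B) (c : B) (L : B →ₗ[K] B) (S T : Set B)
    (h : ∀ s ∈ S, c + L s ∈ T) : ∀ x ∈ zcl β S, c + L x ∈ zcl β T := by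
  intro x hx f hf
  set g : Fin n → MvPolynomial (Fin n) K := fun i =>
    MvPolynomial.C (β.repr c i) + ∑ j, MvPolynomial.C (β.repr (L (β j)) i) * MvPolynomial.X j
    with hg
  have key : ∀ y : B, MvPolynomial.eval (fun i => β.repr y i) (MvPolynomial.bind₁ g f)
      = MvPolynomial.eval (fun i => β.repr (c + L y) i) f := by
    intro y
    rw [show (MvPolynomial.eval fun i => (β.repr y) i) ((MvPolynomial.bind₁ g) f)
        = MvPolynomial.eval (fun i => MvPolynomial.eval (fun j => β.repr y j) (g i)) f from
      MvPolynomial.eval₂Hom_bind₁ _ _ _ _]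
    refine congrArg (fun v => MvPolynomial.eval v f) (funext fun i => ?_)
    have hy : L y = ∑ j, β.repr y j • L (β j) := by
      conv_lhs => rw [← β.sum_repr y]
      rw [map_sum]; simp
    rw [hg]
    simp only [map_add, MvPolynomial.eval_C, map_sum, MvPolynomial.eval_mul,
      MvPolynomial.eval_X]
    rw [Finsupp.add_apply, hy, map_sum]
    simp [Finsupp.finset_sum_apply, mul_comm]
  have := hx _ (fun s hs => by rw [key s]; exact hf _ (h s hs))
  rw [key x] at this; exact this

/-- if `I` is a left ideal of the `F`-subalgebra `A` of `B`, then `cl(I)` is a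
left ideal of `cl(A)`; and if `I` is a two-sided ideal of `A`, then `cl(I)` is a two-sided
ideal of `cl(A)`. -/
theorem stmt_2 {K F B : Type*} [Field K] [IsAlgClosed K] [Field F] [Algebra F K]
    [Ring B] [Algebra K B] [Algebra F B] [IsScalarTower F K B]
    {n : ℕ} (β : Module.Basis (Fin n) K B) (A I : Set B)
    (h1 : (1 : B) ∈ A)
    (hAadd : ∀ x ∈ A, ∀ y ∈ A, x + y ∈ A)
    (hAsmul : ∀ (c : F), ∀ x ∈ A, c • x ∈ A)
    (hAmul : ∀ x ∈ A, ∀ y ∈ A, x * y ∈ A)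
    (hIA : I ⊆ A) (hI0 : (0 : B) ∈ I)
    (hIadd : ∀ x ∈ I, ∀ y ∈ I, x + y ∈ I)
    (hIneg : ∀ x ∈ I, -x ∈ I) :
    ((∀ a ∈ A, ∀ x ∈ I, a * x ∈ I) →
      (zcl β I ⊆ zcl β A ∧ (0 : B) ∈ zcl β I ∧
        (∀ x ∈ zcl β I, ∀ y ∈ zcl β I, x + y ∈ zcl β I) ∧
        (∀ x ∈ zcl β I, -x ∈ zcl β I) ∧
        (∀ a ∈ zcl β A, ∀ x ∈ zcl β I, a * x ∈ zcl β I))) ∧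
    ((∀ a ∈ A, ∀ x ∈ I, a * x ∈ I ∧ x * a ∈ I) →
      (zcl β I ⊆ zcl β A ∧ (0 : B) ∈ zcl β I ∧
        (∀ x ∈ zcl β I, ∀ y ∈ zcl β I, x + y ∈ zcl β I) ∧
        (∀ x ∈ zcl β I, -x ∈ zcl β I) ∧
        (∀ a ∈ zcl β A, ∀ x ∈ zcl β I, a * x ∈ zcl β I ∧ x * a ∈ zcl β I))) := by
  -- common closure facts
  have hsub : zcl β I ⊆ zcl β A := zcl_mono β hIA
  have h0 : (0 : B) ∈ zcl β I := subset_zcl β I hI0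
  have hneg : ∀ x ∈ zcl β I, -x ∈ zcl β I := by
    intro x hx
    have := zcl_affine β 0 (-LinearMap.id) I I
      (fun s hs => by simpa using hIneg s hs) x hx
    simpa using this
  have hadd : ∀ x ∈ zcl β I, ∀ y ∈ zcl β I, x + y ∈ zcl β I := by
    have step1 : ∀ x ∈ I, ∀ y ∈ zcl β I, x + y ∈ zcl β I := by
      intro x hx y hy
      have := zcl_affine β x LinearMap.id I I
        (fun s hs => by simpa using hIadd x hx s hs) y hy
      simpa using this
    intro x hx y hy
    have := zcl_affine β y LinearMap.id I (zcl β I)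
      (fun s hs => by simpa [add_comm] using step1 s hs y hy) x hx
    have h2 := zcl_idem β I this
    simpa [add_comm] using h2
  -- left multiplication, assuming `I` closed under left mult by `A`
  have hmulL : (∀ a ∈ A, ∀ x ∈ I, a * x ∈ I) →
      ∀ a ∈ zcl β A, ∀ x ∈ zcl β I, a * x ∈ zcl β I := by
    intro hm
    have step1 : ∀ a ∈ A, ∀ x ∈ zcl β I, a * x ∈ zcl β I := by
      intro a ha x hx
      have := zcl_affine β 0 (LinearMap.mulLeft K a) I I
        (fun s hs => by simpa using hm a ha s hs) x hx
      simpa using this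
    intro a ha x hx
    have := zcl_affine β 0 (LinearMap.mulRight K x) A (zcl β I)
      (fun s hs => by simpa using step1 s hs x hx) a ha
    have h2 := zcl_idem β I this
    simpa using h2
  -- right multiplication, assuming `I` closed under right mult by `A`
  have hmulR : (∀ a ∈ A, ∀ x ∈ I, x * a ∈ I) →
      ∀ a ∈ zcl β A, ∀ x ∈ zcl β I, x * a ∈ zcl β I := by
    intro hm
    have step1 : ∀ a ∈ A, ∀ x ∈ zcl β I, x * a ∈ zcl β I := by
      intro a ha x hx
      have := zcl_affine β 0 (LinearMap.mulRight K a) I I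
        (fun s hs => by simpa using hm a ha s hs) x hx
      simpa using this
    intro a ha x hx
    have := zcl_affine β 0 (LinearMap.mulLeft K x) A (zcl β I)
      (fun s hs => by simpa using step1 s hs x hx) a ha
    have h2 := zcl_idem β I this
    simpa using h2
  refine ⟨fun hm => ⟨hsub, h0, hadd, hneg, hmulL hm⟩,
    fun hm => ⟨hsub, h0, hadd, hneg, fun a ha x hx =>
      ⟨hmulL (fun a ha x hx => (hm a ha x hx).1) a ha x hx,
       hmulR (fun a ha x hx => (hm a ha x hx).2) a ha x hx⟩⟩⟩
end

section
/- Let B and B' be finite-dimensional K-vector spaces, let ψ : B → B' be a K-linear map, and let A be an F-subspace of B. Then ψ(cl(A)) = cl(ψ(A)); in particular, the image under ψ of a Zariski-closed F-subspace of B is Zariski-closed in B'. -/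
namespace ZCL



variable (K : Type*) [Field K]

/-- The algebra of polynomial functions on a `K`-vector space: generated by linear functionals. -/
def PolyFun (B : Type*) [AddCommGroup B] [Module K B] : Subalgebra K (B → K) :=
  Algebra.adjoin K {f : B → K | IsLinearMap K f}

/-- Basis-free Zariski closure. -/
def CL {B : Type*} [AddCommGroup B] [Module K B] (A : Set B) : Set B :=
  {x | ∀ f ∈ PolyFun K B, (∀ a ∈ A, f a = 0) → f x = 0}

variable {K}
variable {B B₂ : Type*} [AddCommGroup B] [Module K B] [AddCommGroup B₂] [Module K B₂]

lemma linear_mem_polyFun (ℓ : B →ₗ[K] K) : (ℓ : B → K) ∈ PolyFun K B :=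
  Algebra.subset_adjoin ℓ.isLinear

lemma const_mem_polyFun (c : K) : (fun _ : B => c) ∈ PolyFun K B := by
  have : (fun _ : B => c) = algebraMap K (B → K) c := rfl
  rw [this]; exact Subalgebra.algebraMap_mem _ c

/-- Composition with an affine map preserves polynomial functions. -/
lemma affine_comp_mem_polyFun {f : B → K} (hf : f ∈ PolyFun K B) (T : B₂ →ₗ[K] B) (b : B) :
    (fun x : B₂ => f (T x + b)) ∈ PolyFun K B₂ := by
  induction hf using Algebra.adjoin_induction with
  | mem g hg =>
      have hlin : IsLinearMap K g := hg
      have : (fun x : B₂ => g (T x + b)) =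
          (((IsLinearMap.mk' g hlin).comp T : B₂ →ₗ[K] K) : B₂ → K) + (fun _ => g b) := by
        funext x
        simp [hlin.map_add]
      rw [this]
      exact add_mem (linear_mem_polyFun _) (const_mem_polyFun _)
  | algebraMap r => exact const_mem_polyFun r
  | add g₁ g₂ _ _ h1 h2 => exact add_mem h1 h2
  | mul g₁ g₂ _ _ h1 h2 => exact mul_mem h1 h2

lemma subset_CL (A : Set B) : A ⊆ CL K A := fun a ha f _ hvan => hvan a ha

lemma CL_mono {A A' : Set B} (h : A ⊆ A') : CL K A ⊆ CL K A' :=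
  fun x hx f hf hvan => hx f hf (fun a ha => hvan a (h ha))

lemma vanish_CL {A : Set B} {f : B → K} (hf : f ∈ PolyFun K B) (hvan : ∀ a ∈ A, f a = 0) :
    ∀ x ∈ CL K A, f x = 0 := fun _ hx => hx f hf hvan

/-- Easy direction: linear images of closures lie in the closure of the image. -/
lemma image_CL_subset (ψ : B →ₗ[K] B₂) (A : Set B) :
    ⇑ψ '' CL K A ⊆ CL K (⇑ψ '' A) := by
  rintro _ ⟨x, hx, rfl⟩ f hf hvan
  have hcomp : (fun u : B => f (ψ u + 0)) ∈ PolyFun K B := affine_comp_mem_polyFun hf ψ 0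
  simpa using hx _ hcomp (fun a ha => by simpa using hvan _ ⟨a, ha, rfl⟩)

/-- Closure commutes with linear equivalences. -/
lemma CL_image_equiv (e : B ≃ₗ[K] B₂) (A : Set B) :
    CL K (⇑e '' A) = ⇑e '' CL K A := by
  refine Set.Subset.antisymm ?_ (image_CL_subset e.toLinearMap A)
  intro y hy
  refine ⟨e.symm y, ?_, by simp⟩
  intro f hf hvan
  have hcomp : (fun u : B₂ => f (e.symm u + 0)) ∈ PolyFun K B₂ :=
    affine_comp_mem_polyFun hf e.symm.toLinearMap 0
  have := hy _ hcomp (fun a ⟨w, hw, hwa⟩ => by subst hwa; simpa using hvan w hw)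
  simpa using this

/-- Subgroup predicate for a subset of an additive group. -/
def Sub3 {G : Type*} [AddCommGroup G] (A : Set G) : Prop :=
  (0 : G) ∈ A ∧ (∀ x ∈ A, ∀ y ∈ A, x + y ∈ A) ∧ (∀ x ∈ A, -x ∈ A)

lemma Sub3.image {A : Set B} (hA : Sub3 A) (ψ : B →ₗ[K] B₂) : Sub3 (⇑ψ '' A) := by
  obtain ⟨h0, hadd, hneg⟩ := hA
  refine ⟨⟨0, h0, by simp⟩, ?_, ?_⟩
  · rintro _ ⟨x, hx, rfl⟩ _ ⟨y, hy, rfl⟩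
    exact ⟨x + y, hadd x hx y hy, by simp⟩
  · rintro _ ⟨x, hx, rfl⟩
    exact ⟨-x, hneg x hx, by simp⟩

lemma Sub3.sub_mem {A : Set B} (hA : Sub3 A) {x y : B} (hx : x ∈ A) (hy : y ∈ A) :
    x - y ∈ A := by
  rw [sub_eq_add_neg]; exact hA.2.1 x hx _ (hA.2.2 y hy)

/-- The closure of a subgroup is a subgroup. -/
lemma Sub3.CL {A : Set B} (hA : Sub3 A) : Sub3 (CL K A) := by
  obtain ⟨h0, hadd, hneg⟩ := hA
  refine ⟨subset_CL A h0, ?_, ?_⟩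
  · intro x hx y hy f hf hvan
    have step1 : ∀ a ∈ A, f (x + a) = 0 := by
      intro a ha
      have h1 : (fun u : B => f (u + a)) ∈ PolyFun K B := by
        simpa using affine_comp_mem_polyFun hf (LinearMap.id (R := K) (M := B)) a
      exact hx _ h1 (fun b hb => hvan _ (hadd b hb a ha))
    have h2 : (fun u : B => f (x + u)) ∈ PolyFun K B := by
      have := affine_comp_mem_polyFun hf (LinearMap.id (R := K) (M := B)) x
      simpa [add_comm] using this
    exact hy _ h2 step1
  · intro x hx f hf hvan
    have h1 : (fun u : B => f (-u)) ∈ PolyFun K B := by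
      simpa using affine_comp_mem_polyFun hf (-(LinearMap.id (R := K) (M := B))) 0
    exact hx _ h1 (fun a ha => by simpa using hvan _ (hneg a ha))


variable {K : Type*} [Field K]
variable {B B₂ : Type*} [AddCommGroup B] [Module K B] [AddCommGroup B₂] [Module K B₂]

lemma PolyFun_placeholder : True := trivial

-- separation: a linear functional vanishing on M but not at x ∉ M
lemma exists_functional [FiniteDimensional K B] (M : Submodule K B) {x : B} (hx : x ∉ M) :
    ∃ ℓ : B →ₗ[K] K, (∀ m ∈ M, ℓ m = 0) ∧ ℓ x ≠ 0 := by
  have hxq : (Submodule.Quotient.mk x : B ⧸ M) ≠ 0 := by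
    simpa [Submodule.Quotient.mk_eq_zero] using hx
  let b := Module.finBasis K (B ⧸ M)
  have : ∃ i, b.coord i (Submodule.Quotient.mk x) ≠ 0 := by
    by_contra hcontra
    push_neg at hcontra
    exact hxq ((Module.Basis.forall_coord_eq_zero_iff b).mp hcontra)
  obtain ⟨i, hi⟩ := this
  refine ⟨(b.coord i).comp M.mkQ, ?_, ?_⟩
  · intro m hm
    simp [Submodule.Quotient.mk_eq_zero, (Submodule.Quotient.mk_eq_zero M).mpr hm]
  · simpa using hi

lemma CL_subset_submodule [FiniteDimensional K B] (M : Submodule K B) {A : Set B}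
    (hA : A ⊆ M) : CL K A ⊆ M := by
  intro x hx
  by_contra hxM
  obtain ⟨ℓ, hℓvan, hℓx⟩ := exists_functional M hxM
  exact hℓx (hx _ (linear_mem_polyFun ℓ) (fun a ha => hℓvan a (hA ha)))

/-- Closure of a set inside a submodule, computed in the submodule. -/
lemma mem_CL_submodule [FiniteDimensional K B] (M : Submodule K B) (S : Set B)
    (hS : S ⊆ M) {y : B} (hy : y ∈ CL K S) (hyM : y ∈ M) :
    (⟨y, hyM⟩ : M) ∈ CL K ((M.subtype) ⁻¹' S) := by
  intro g hg hvan
  obtain ⟨N, hN⟩ := M.exists_isCompl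
  let pr := M.linearProjOfIsCompl N hN
  have hpr : (fun u : B => g (pr u + 0)) ∈ PolyFun K B := affine_comp_mem_polyFun hg pr 0
  have := hy _ hpr (fun a ha => by
    have haM : a ∈ M := hS ha
    have : pr a = ⟨a, haM⟩ := Submodule.linearProjOfIsCompl_apply_left hN ⟨a, haM⟩
    simpa [this] using hvan ⟨a, haM⟩ ha)
  have hpry : pr y = ⟨y, hyM⟩ := Submodule.linearProjOfIsCompl_apply_left hN ⟨y, hyM⟩
  simpa [hpry] using this

/-- The hard inclusion for injective maps. -/
lemma injective_case [FiniteDimensional K B₂] (ψ : B →ₗ[K] B₂)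
    (hinj : Function.Injective ψ) (G : Set B) :
    CL K (⇑ψ '' G) ⊆ ⇑ψ '' CL K G := by
  intro y hy
  have hyM : y ∈ LinearMap.range ψ :=
    CL_subset_submodule (LinearMap.range ψ) (by rintro _ ⟨g, _, rfl⟩; exact ⟨g, rfl⟩) hy
  have h2 : (⟨y, hyM⟩ : LinearMap.range ψ) ∈
      CL K (((LinearMap.range ψ).subtype) ⁻¹' (⇑ψ '' G)) :=
    mem_CL_submodule _ _ (by rintro _ ⟨g, _, rfl⟩; exact ⟨g, rfl⟩) hy hyM
  let e : B ≃ₗ[K] LinearMap.range ψ := LinearEquiv.ofInjective ψ hinj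
  have hpre : ((LinearMap.range ψ).subtype) ⁻¹' (⇑ψ '' G) = ⇑e '' G := by
    ext ⟨w, hw⟩
    simp only [Set.mem_preimage, Submodule.coe_subtype, Set.mem_image]
    constructor
    · rintro ⟨g, hg, hgw⟩
      exact ⟨g, hg, by apply Subtype.ext; simpa [e] using hgw⟩
    · rintro ⟨g, hg, hgw⟩
      exact ⟨g, hg, by simpa [e] using congrArg Subtype.val hgw⟩
  rw [hpre, CL_image_equiv] at h2
  obtain ⟨x, hx, hxy⟩ := h2
  exact ⟨x, hx, by simpa [e] using congrArg Subtype.val hxy⟩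


open Polynomial
variable {K : Type*} [Field K]
variable {B₀ : Type*} [AddCommGroup B₀] [Module K B₀]

/-- Specialize a polynomial with function coefficients at a point of `B₀`. -/
noncomputable def fev (p : Polynomial (B₀ → K)) (x : B₀) : Polynomial K :=
  p.map (Pi.evalRingHom (fun _ : B₀ => K) x)

@[simp] lemma fev_coeff (p : Polynomial (B₀ → K)) (x : B₀) (j : ℕ) :
    (fev p x).coeff j = p.coeff j x := coeff_map _ _

lemma fev_natDegree_le (p : Polynomial (B₀ → K)) (x : B₀) :
    (fev p x).natDegree ≤ p.natDegree := natDegree_map_le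

lemma fev_eval_eq_sum {p : Polynomial (B₀ → K)} {n : ℕ} (hn : p.natDegree < n)
    (x : B₀) (t : K) :
    (fev p x).eval t = ∑ j ∈ Finset.range n, p.coeff j x * t ^ j := by
  rw [eval_eq_sum_range' (lt_of_le_of_lt (fev_natDegree_le p x) hn)]
  simp

lemma fev_C_mul (c : B₀ → K) (p : Polynomial (B₀ → K)) (x : B₀) :
    fev (Polynomial.C c * p) x = Polynomial.C (c x) * fev p x := by
  simp [fev, Polynomial.map_mul]

lemma fev_sub (p q : Polynomial (B₀ → K)) (x : B₀) :
    fev (p - q) x = fev p x - fev q x := by simp [fev]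

lemma fev_zero_of_coeffs {p : Polynomial (B₀ → K)} {x : B₀}
    (h : ∀ j, p.coeff j x = 0) : fev p x = 0 := by
  ext j; simp [h j]

/-- Representation of polynomial functions on `B₀ × K` as polynomials in the
second variable with polynomial-function coefficients. -/
lemma polyFun_prod_rep {f : B₀ × K → K} (hf : f ∈ PolyFun K (B₀ × K)) :
    ∃ p : Polynomial (B₀ → K), (∀ j, p.coeff j ∈ PolyFun K B₀) ∧
      ∀ x t, f (x, t) = (fev p x).eval t := by
  induction hf using Algebra.adjoin_induction with
  | mem g hg =>
      have hlin : IsLinearMap K g := hg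
      refine ⟨Polynomial.C (fun x => g (x, 0)) +
        Polynomial.C (fun _ => g ((0 : B₀), (1 : K))) * Polynomial.X, ?_, ?_⟩
      · intro j
        match j with
        | 0 =>
            simp only [coeff_add, coeff_C_zero, coeff_C_mul, coeff_X_zero, mul_zero, add_zero]
            have : (fun x : B₀ => g (x, 0)) =
                ⇑((IsLinearMap.mk' g hlin).comp (LinearMap.inl K B₀ K)) := rfl
            rw [this]; exact linear_mem_polyFun _
        | 1 =>
            simp only [coeff_add, coeff_C_mul, coeff_X_one, mul_one]
            rw [Polynomial.coeff_C]
            simpa using add_mem (zero_mem _) (const_mem_polyFun (B := B₀) (g (0, 1)))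
        | (n + 2) => simpa using zero_mem _
      · intro x t
        have hxt : (x, t) = (x, 0) + t • ((0 : B₀), (1 : K)) := by
          simp
        rw [hxt, hlin.map_add, hlin.map_smul]
        have hfev : fev (Polynomial.C (fun x : B₀ => g (x, 0)) +
            Polynomial.C (fun _ : B₀ => g ((0 : B₀), (1 : K))) * Polynomial.X) x =
            Polynomial.C (g (x, 0)) + Polynomial.C (g ((0 : B₀), (1 : K))) * Polynomial.X := by
          simp [fev]
        rw [hfev]
        simp only [eval_add, eval_mul, eval_C, eval_X, smul_eq_mul]
        ring
  | algebraMap r =>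
      refine ⟨Polynomial.C (fun _ => r), fun j => ?_, fun x t => by simp [fev]⟩
      rw [Polynomial.coeff_C]
      split
      · exact const_mem_polyFun r
      · exact zero_mem _
  | add f₁ f₂ h₁ h₂ ih₁ ih₂ =>
      obtain ⟨p₁, hg₁, he₁⟩ := ih₁
      obtain ⟨p₂, hg₂, he₂⟩ := ih₂
      refine ⟨p₁ + p₂, fun j => by simpa using add_mem (hg₁ j) (hg₂ j), fun x t => ?_⟩
      have : fev (p₁ + p₂) x = fev p₁ x + fev p₂ x := Polynomial.map_add _
      rw [this]
      simp [he₁ x t, he₂ x t]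
  | mul f₁ f₂ h₁ h₂ ih₁ ih₂ =>
      obtain ⟨p₁, hg₁, he₁⟩ := ih₁
      obtain ⟨p₂, hg₂, he₂⟩ := ih₂
      refine ⟨p₁ * p₂, fun j => ?_, fun x t => ?_⟩
      · rw [Polynomial.coeff_mul]
        exact sum_mem (fun c _ => mul_mem (hg₁ c.1) (hg₂ c.2))
      · have : fev (p₁ * p₂) x = fev p₁ x * fev p₂ x := Polynomial.map_mul _
        rw [this]
        simp [he₁ x t, he₂ x t]

/-- Pseudo-division. -/
lemma pseudo_div {R : Type*} [CommRing R] (a : R[X]) {r : ℕ} (hr : 1 ≤ r)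
    (hdeg : a.natDegree ≤ r) (b : R[X]) :
    ∃ (N : ℕ) (q rem : R[X]),
      Polynomial.C (a.coeff r) ^ N * b = q * a + rem ∧ rem.natDegree < r := by
  suffices H : ∀ (n : ℕ) (b : R[X]), b.natDegree ≤ n →
      ∃ (N : ℕ) (q rem : R[X]),
        Polynomial.C (a.coeff r) ^ N * b = q * a + rem ∧ rem.natDegree < r by
    exact H b.natDegree b le_rfl
  intro n
  induction n with
  | zero =>
      intro b hb
      exact ⟨0, 0, b, by simp, lt_of_le_of_lt hb hr⟩
  | succ n IH =>
      intro b hb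
      by_cases hbr : b.natDegree < r
      · exact ⟨0, 0, b, by simp, hbr⟩
      push_neg at hbr
      set d := b.natDegree with hd
      set c := a.coeff r with hc
      set b' := Polynomial.C c * b - Polynomial.C (b.coeff d) * Polynomial.X ^ (d - r) * a
        with hb'
      have hcoeff : ∀ N, d ≤ N → b'.coeff N = 0 := by
        intro N hN
        have hXa : (Polynomial.X ^ (d - r) * a).coeff N = a.coeff (N - (d - r)) := by
          have hNd : N - (d - r) + (d - r) = N := by omega
          conv_lhs => rw [← hNd]
          exact Polynomial.coeff_X_pow_mul a (d - r) (N - (d - r))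
        have hb'N : b'.coeff N = c * b.coeff N - b.coeff d * a.coeff (N - (d - r)) := by
          rw [hb', coeff_sub, coeff_C_mul, mul_assoc, coeff_C_mul, hXa]
        rcases eq_or_lt_of_le hN with hNe | hNlt
        · have hrr : N - (d - r) = r := by omega
          rw [hb'N, hrr, ← hc, ← hNe]
          ring
        · have h1 : b.coeff N = 0 := coeff_eq_zero_of_natDegree_lt hNlt
          have h2 : a.coeff (N - (d - r)) = 0 := by
            apply coeff_eq_zero_of_natDegree_lt
            omega
          rw [hb'N, h1, h2]
          ring
      have hb'deg : b'.natDegree ≤ n := by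
        have hd1 : 1 ≤ d := le_trans hr hbr
        apply natDegree_le_iff_coeff_eq_zero.mpr
        intro N hN
        exact hcoeff N (by omega)
      obtain ⟨N', q', rem', heq, hrem⟩ := IH b' hb'deg
      refine ⟨N' + 1, q' + Polynomial.C c ^ N' * Polynomial.C (b.coeff d) *
        Polynomial.X ^ (d - r), rem', ?_, hrem⟩
      have : Polynomial.C c ^ (N' + 1) * b =
          Polynomial.C c ^ N' * b' +
            Polynomial.C c ^ N' * (Polynomial.C (b.coeff d) * Polynomial.X ^ (d - r) * a) := by
        rw [hb']; ring
      rw [this, heq]; ring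

/-- If every root of `p` is a root of `q`, then `p ∣ q ^ natDegree p`. -/
lemma dvd_pow_of_roots_subset [IsAlgClosed K] {p q : Polynomial K} (hp : p ≠ 0)
    (h : ∀ ρ : K, p.IsRoot ρ → q.IsRoot ρ) : p ∣ q ^ p.natDegree := by
  have hsplit : Splits p := IsAlgClosed.splits p
  have heq := hsplit.eq_prod_roots
  have hmult : ∀ m : Multiset K, (∀ ρ ∈ m, q.IsRoot ρ) →
      (m.map fun a => Polynomial.X - Polynomial.C a).prod ∣ q ^ Multiset.card m := by
    intro m
    induction m using Multiset.induction with
    | empty => intro _; simp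
    | cons ρ m IH =>
        intro hm
        rw [Multiset.map_cons, Multiset.prod_cons, Multiset.card_cons, pow_succ']
        exact mul_dvd_mul (dvd_iff_isRoot.mpr (hm ρ (Multiset.mem_cons_self ρ m)))
          (IH (fun a ha => hm a (Multiset.mem_cons_of_mem ha)))
  have hl : p.leadingCoeff ≠ 0 := leadingCoeff_ne_zero.mpr hp
  have hpd : p ∣ (p.roots.map fun a => Polynomial.X - Polynomial.C a).prod := by
    set PR := (p.roots.map fun a => Polynomial.X - Polynomial.C a).prod with hPR
    set lc := p.leadingCoeff with hlc
    refine ⟨Polynomial.C lc⁻¹, ?_⟩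
    rw [heq, mul_comm (Polynomial.C lc) PR, mul_assoc, ← Polynomial.C_mul,
      mul_inv_cancel₀ hl, Polynomial.C_1, mul_one]
  refine hpd.trans ((hmult p.roots ?_).trans (pow_dvd_pow q (p.card_roots')))
  intro ρ hρ
  exact h ρ ((mem_roots'.mp hρ).2)

lemma eq_zero_of_dvd_of_natDegree_lt' {R : Type*} [CommRing R] [IsDomain R]
    {p w : R[X]} (hdvd : p ∣ w) (hlt : w.natDegree < p.natDegree) : w = 0 := by
  by_contra hw
  exact absurd (natDegree_le_of_dvd hdvd hw) (not_le.mpr hlt)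


open Polynomial
variable {K : Type*} [Field K]
variable {B₀ : Type*} [AddCommGroup B₀] [Module K B₀]

lemma sumC_coeff {R : Type*} [Semiring R] (g : ℕ → R) (n m : ℕ) :
    (∑ j ∈ Finset.range n, Polynomial.C (g j) * Polynomial.X ^ j).coeff m =
      if m < n then g m else 0 := by
  rw [finset_sum_coeff]
  have : ∀ j ∈ Finset.range n, (Polynomial.C (g j) * Polynomial.X ^ j).coeff m =
      if m = j then g j else 0 := by
    intro j _
    rw [coeff_C_mul, coeff_X_pow]
    split <;> simp_all
  rw [Finset.sum_congr rfl this, Finset.sum_ite_eq]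
  simp [Finset.mem_range]

/-- Shifting the argument of a coefficient-wise polynomial. -/
lemma exists_shift (P : Polynomial (B₀ → K)) (r : ℕ) (hnd : P.natDegree ≤ r)
    (hg : ∀ j, P.coeff j ∈ PolyFun K B₀) (a₁ : B₀) (a₂ : K) :
    ∃ pa : Polynomial (B₀ → K),
      (∀ m, pa.coeff m ∈ PolyFun K B₀) ∧
      (∀ x t, (fev pa x).eval t = (fev P (x + a₁)).eval (t + a₂)) ∧
      (pa.coeff r = fun u => P.coeff r (u + a₁)) ∧
      (∀ m, r < m → pa.coeff m = 0) := by
  classical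
  set pa := ∑ j ∈ Finset.range (r + 1), Polynomial.C (fun u => P.coeff j (u + a₁)) *
    (Polynomial.X + Polynomial.C (fun _ : B₀ => a₂)) ^ j with hpa
  have hco : ∀ m, pa.coeff m = ∑ j ∈ Finset.range (r + 1),
      (fun u => P.coeff j (u + a₁)) * ((fun _ : B₀ => a₂) ^ (j - m) * ((j.choose m : ℕ) : B₀ → K)) := by
    intro m
    rw [hpa, finset_sum_coeff]
    refine Finset.sum_congr rfl (fun j _ => ?_)
    rw [coeff_C_mul, coeff_X_add_C_pow]
  have hconst : ∀ j m, ((fun _ : B₀ => a₂) ^ (j - m) * ((j.choose m : ℕ) : B₀ → K)) =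
      (fun _ : B₀ => a₂ ^ (j - m) * ((j.choose m : ℕ) : K)) := by
    intro j m
    funext u
    simp [Pi.pow_apply]
  have hmemcoeff : ∀ j, (fun u => P.coeff j (u + a₁)) ∈ PolyFun K B₀ := by
    intro j
    have := affine_comp_mem_polyFun (hg j) (LinearMap.id (R := K) (M := B₀)) a₁
    simpa using this
  refine ⟨pa, ?_, ?_, ?_, ?_⟩
  · intro m
    rw [hco m]
    exact sum_mem (fun j _ => mul_mem (hmemcoeff j)
      (by rw [hconst j m]; exact const_mem_polyFun _))
  · intro x t
    have h1 : fev pa x = ∑ j ∈ Finset.range (r + 1),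
        Polynomial.C (P.coeff j (x + a₁)) * (Polynomial.X + Polynomial.C a₂) ^ j := by
      rw [hpa, fev, Polynomial.map_sum]
      refine Finset.sum_congr rfl (fun j _ => ?_)
      rw [Polynomial.map_mul, Polynomial.map_pow, Polynomial.map_add, map_C, map_X, map_C]
      rfl
    rw [h1, eval_finset_sum, fev_eval_eq_sum (lt_of_le_of_lt hnd (lt_add_one r)) (x + a₁) (t + a₂)]
    refine Finset.sum_congr rfl (fun j _ => ?_)
    simp
  · rw [hco r]
    rw [Finset.sum_eq_single_of_mem r (Finset.self_mem_range_succ r)]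
    · funext u
      simp
    · intro j hj hjne
      have hjr : j < r := lt_of_le_of_ne (Nat.lt_succ_iff.mp (Finset.mem_range.mp hj)) hjne
      rw [hconst j r, Nat.choose_eq_zero_of_lt hjr]
      funext u
      simp
  · intro m hm
    rw [hco m]
    refine Finset.sum_eq_zero (fun j hj => ?_)
    have hjm : j < m := lt_of_le_of_lt (Nat.lt_succ_iff.mp (Finset.mem_range.mp hj)) hm
    rw [hconst j m, Nat.choose_eq_zero_of_lt hjm]
    funext u
    simp


open Polynomial
variable {K : Type*} [Field K] [IsAlgClosed K]
variable {B₀ : Type*} [AddCommGroup B₀] [Module K B₀]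

theorem fst_image_CL (G : Set (B₀ × K)) (hG : Sub3 G) :
    Prod.fst '' CL K G = CL K (Prod.fst '' G) := by
  classical
  have hfst : ⇑(LinearMap.fst K B₀ K) = Prod.fst := rfl
  refine Set.Subset.antisymm (by rw [← hfst]; exact image_CL_subset _ G) ?_
  intro y hy
  have hVsub : Sub3 (CL K G) := hG.CL
  have hGV : G ⊆ CL K G := subset_CL G
  have hSsub : Sub3 (Prod.fst '' CL K G) := by
    rw [← hfst]; exact hVsub.image _
  have hyY : y ∈ CL K (Prod.fst '' CL K G) :=
    CL_mono (Set.image_mono hGV) hy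
  by_cases hline : ∀ t : K, ((0 : B₀), t) ∈ CL K G
  · -- Case 1: the vertical line over 0 lies in the closure
    refine ⟨(y, 0), ?_, rfl⟩
    intro f hf hvanG
    have hfV : ∀ w ∈ CL K G, f w = 0 := vanish_CL hf hvanG
    have h₀mem : (fun x : B₀ => f (x, 0)) ∈ PolyFun K B₀ := by
      have := affine_comp_mem_polyFun hf (LinearMap.inl K B₀ K) 0
      simpa using this
    have hvan₀ : ∀ b ∈ Prod.fst '' G, (fun x : B₀ => f (x, 0)) b = 0 := by
      rintro _ ⟨⟨a₁, a₂⟩, ha, rfl⟩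
      have hmem : (a₁, (0 : K)) ∈ CL K G := by
        have := hVsub.2.1 _ (hGV ha) _ (hline (-a₂))
        simpa using this
      exact hfV _ hmem
    exact hy _ h₀mem hvan₀
  · -- Case 2
    push_neg at hline
    obtain ⟨t₀, ht₀⟩ := hline
    -- notation: S is the image of the closure, Y its closure
    set V : Set (B₀ × K) := CL K G with hV
    set S : Set B₀ := Prod.fst '' V with hS
    have hSY : S ⊆ CL K S := subset_CL S
    have hYsub : Sub3 (CL K S) := hSsub.CL
    have keyY : ∀ c : B₀ → K, c ∈ PolyFun K B₀ → (∀ x ∈ S, c x = 0) →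
        ∀ x ∈ CL K S, c x = 0 := fun c hc hvan => vanish_CL hc hvan
    -- the minimality predicate
    set Pr : ℕ → Prop := fun r => ∃ p : Polynomial (B₀ → K),
      (∀ j, p.coeff j ∈ PolyFun K B₀) ∧ (∀ w ∈ V, (fev p w.1).eval w.2 = 0) ∧
      (¬ ∀ x ∈ S, p.coeff r x = 0) ∧ (∀ j, r < j → ∀ x ∈ S, p.coeff j x = 0) with hPrdef
    -- from any nontrivial relation we get some Pr r', with r' among nontrivial indices
    have maxidx : ∀ p : Polynomial (B₀ → K), (∀ j, p.coeff j ∈ PolyFun K B₀) →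
        (∀ w ∈ V, (fev p w.1).eval w.2 = 0) → (∃ j, ¬ ∀ x ∈ S, p.coeff j x = 0) →
        ∃ r', Pr r' ∧ ¬ ∀ x ∈ S, p.coeff r' x = 0 := by
      intro p hpg hpV ⟨j₀, hj₀⟩
      have hmemx : ∀ j, j ∈ (Finset.range (p.natDegree + 1)).filter
          (fun j => ¬ ∀ x ∈ S, p.coeff j x = 0) ↔
          (j < p.natDegree + 1 ∧ ¬ ∀ x ∈ S, p.coeff j x = 0) := by
        intro j
        rw [Finset.mem_filter, Finset.mem_range]
      have hj₀mem : j₀ ∈ (Finset.range (p.natDegree + 1)).filter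
          (fun j => ¬ ∀ x ∈ S, p.coeff j x = 0) := by
        rw [hmemx j₀]
        refine ⟨Nat.lt_succ_of_le ?_, hj₀⟩
        by_contra hgt
        push_neg at hgt
        have hz : p.coeff j₀ = 0 := coeff_eq_zero_of_natDegree_lt hgt
        exact hj₀ (fun x _ => by rw [hz]; rfl)
      have hne : ((Finset.range (p.natDegree + 1)).filter
          (fun j => ¬ ∀ x ∈ S, p.coeff j x = 0)).Nonempty := ⟨j₀, hj₀mem⟩
      have hr'mem := Finset.max'_mem _ hne
      rw [hmemx _] at hr'mem
      refine ⟨_, ⟨p, hpg, hpV, hr'mem.2, ?_⟩, hr'mem.2⟩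
      intro j hj x hxS
      by_cases hjd : j ≤ p.natDegree
      · by_contra hne0
        have hjmem : j ∈ (Finset.range (p.natDegree + 1)).filter
            (fun j => ¬ ∀ x ∈ S, p.coeff j x = 0) := by
          rw [hmemx j]
          exact ⟨Nat.lt_succ_of_le hjd, fun hall => hne0 (hall x hxS)⟩
        exact absurd (Finset.le_max' _ j hjmem) (not_le.mpr hj)
      · push_neg at hjd
        rw [coeff_eq_zero_of_natDegree_lt hjd]
        rfl
    -- existence of a nontrivial relation
    have hPrex : ∃ r, Pr r := by
      have ht₀' : ((0 : B₀), t₀) ∉ CL K G := ht₀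
      have hex : ∃ f, f ∈ PolyFun K (B₀ × K) ∧ (∀ a ∈ G, f a = 0) ∧
          f ((0 : B₀), t₀) ≠ 0 := by
        by_contra hc
        push_neg at hc
        apply ht₀'
        intro f hf hvan
        exact hc f hf hvan
      obtain ⟨f, hf, hvanf, hft₀⟩ := hex
      obtain ⟨p₁, hp₁g, hp₁e⟩ := polyFun_prod_rep hf
      have hp₁V : ∀ w ∈ V, (fev p₁ w.1).eval w.2 = 0 := by
        intro w hw
        rw [← hp₁e w.1 w.2]
        exact vanish_CL hf hvanf (w.1, w.2) hw
      have hnt : ∃ j, ¬ ∀ x ∈ S, p₁.coeff j x = 0 := by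
        by_contra hall
        push_neg at hall
        have h0S : (0 : B₀) ∈ S := ⟨0, hGV hG.1, rfl⟩
        have hz : fev p₁ (0 : B₀) = 0 := fev_zero_of_coeffs (fun j => hall j 0 h0S)
        have he := hp₁e 0 t₀
        rw [hz] at he
        simp at he
        exact hft₀ he
      obtain ⟨r', hPr', _⟩ := maxidx p₁ hp₁g hp₁V hnt
      exact ⟨r', hPr'⟩
    obtain ⟨p₂, hp₂g, hp₂V, hp₂r, hp₂hi⟩ := Nat.find_spec hPrex
    set r := Nat.find hPrex with hrdef
    have hMIN : ∀ q : Polynomial (B₀ → K), (∀ j, q.coeff j ∈ PolyFun K B₀) →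
        (∀ w ∈ V, (fev q w.1).eval w.2 = 0) →
        (∀ j, r ≤ j → ∀ x ∈ S, q.coeff j x = 0) →
        ∀ j, ∀ x ∈ S, q.coeff j x = 0 := by
      intro q hqg hqV hqhi
      by_contra hc
      push_neg at hc
      obtain ⟨j, x, hxS, hne⟩ := hc
      have hnt : ∃ j, ¬ ∀ x ∈ S, q.coeff j x = 0 :=
        ⟨j, fun hall => hne (hall x hxS)⟩
      obtain ⟨r', hPr', hr'nt⟩ := maxidx q hqg hqV hnt
      have hr'r : r' < r := by
        by_contra hge
        push_neg at hge
        exact hr'nt (hqhi r' hge)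
      exact Nat.find_min hPrex hr'r hPr'
    have hr1 : 1 ≤ r := by
      by_contra hc
      push_neg at hc
      have hr0 : r = 0 := by omega
      rw [hr0] at hp₂r hp₂hi
      apply hp₂r
      intro x hxS
      obtain ⟨w, hwV, hw1⟩ := hxS
      have h0 := hp₂V w hwV
      rw [fev_eval_eq_sum (lt_add_one _)] at h0
      have hsingle : ∑ j ∈ Finset.range (p₂.natDegree + 1), p₂.coeff j w.1 * w.2 ^ j =
          p₂.coeff 0 w.1 * w.2 ^ 0 := by
        refine Finset.sum_eq_single_of_mem 0 (Finset.mem_range.mpr (Nat.succ_pos _))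
          (fun j _ hj0 => ?_)
        rw [hp₂hi j (Nat.pos_of_ne_zero hj0) w.1 ⟨w, hwV, rfl⟩]
        ring
      rw [hsingle, hw1] at h0
      simpa using h0
    -- truncate p₂ to degree ≤ r
    set P : Polynomial (B₀ → K) :=
      ∑ j ∈ Finset.range (r + 1), Polynomial.C (p₂.coeff j) * Polynomial.X ^ j with hPdef
    have hPco : ∀ m, P.coeff m = if m < r + 1 then p₂.coeff m else 0 := by
      intro m
      rw [hPdef]
      exact sumC_coeff _ _ m
    have hPg : ∀ j, P.coeff j ∈ PolyFun K B₀ := by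
      intro j
      rw [hPco j]
      split
      · exact hp₂g j
      · exact zero_mem _
    have hPnd : P.natDegree ≤ r := by
      apply natDegree_le_iff_coeff_eq_zero.mpr
      intro m hm
      rw [hPco m]
      have hmr : ¬ (m < r + 1) := by omega
      simp [hmr]
    have hPcr : P.coeff r = p₂.coeff r := by
      rw [hPco r]
      simp
    have hPV : ∀ w ∈ V, (fev P w.1).eval w.2 = 0 := by
      intro w hw
      have hx1S : w.1 ∈ S := ⟨w, hw, rfl⟩
      have hev := hp₂V w hw
      set n := p₂.natDegree + 1 + (r + 1) with hn
      rw [fev_eval_eq_sum (show p₂.natDegree < n by omega)] at hev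
      rw [fev_eval_eq_sum (show P.natDegree < n by omega)]
      rw [← hev]
      refine Finset.sum_congr rfl (fun j _ => ?_)
      rw [hPco j]
      split
      · rfl
      · rename_i hj
        rw [hp₂hi j (by omega) w.1 hx1S]
        simp
    -- the leading coefficient
    set cr : B₀ → K := P.coeff r with hcr
    have hcrP : cr ∈ PolyFun K B₀ := hPg r
    have hcrS : ¬ ∀ x ∈ S, cr x = 0 := by
      rw [hPcr]
      exact hp₂r
    -- the semi-invariance identity on the closure of S
    have hIDY : ∀ a ∈ V, ∀ x ∈ CL K S, ∀ t : K,
        cr (x + a.1) * (fev P x).eval t = cr x * (fev P (x + a.1)).eval (t + a.2) := by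
      intro a haV
      obtain ⟨pa, hpag, hpaev, hpacr, hpahi⟩ := exists_shift P r hPnd hPg a.1 a.2
      set ga : Polynomial (B₀ → K) :=
        Polynomial.C (fun u => cr (u + a.1)) * P - Polynomial.C cr * pa with hga
      have hgag : ∀ j, ga.coeff j ∈ PolyFun K B₀ := by
        intro j
        rw [hga, coeff_sub, coeff_C_mul, coeff_C_mul]
        have h1 : (fun u => cr (u + a.1)) ∈ PolyFun K B₀ := by
          have := affine_comp_mem_polyFun hcrP (LinearMap.id (R := K) (M := B₀)) a.1
          simpa using this
        exact sub_mem (mul_mem h1 (hPg j)) (mul_mem hcrP (hpag j))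
      have hgaV : ∀ w ∈ V, (fev ga w.1).eval w.2 = 0 := by
        intro w hw
        have hwa : w + a ∈ V := hVsub.2.1 w hw a haV
        have h1 : fev ga w.1 = Polynomial.C (cr (w.1 + a.1)) * fev P w.1 -
            Polynomial.C (cr w.1) * fev pa w.1 := by
          rw [hga, fev_sub, fev_C_mul, fev_C_mul]
        rw [h1]
        rw [eval_sub, eval_mul, eval_mul, eval_C, eval_C, hPV w hw, hpaev w.1 w.2]
        have h2 : (fev P (w.1 + a.1)).eval (w.2 + a.2) = 0 := hPV (w + a) hwa
        rw [h2]
        ring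
      have hgahi : ∀ j, r ≤ j → ∀ x ∈ S, ga.coeff j x = 0 := by
        intro j hj x hxS
        have hco : ga.coeff j = (fun u => cr (u + a.1)) * P.coeff j - cr * pa.coeff j := by
          rw [hga, coeff_sub, coeff_C_mul, coeff_C_mul]
        rcases eq_or_lt_of_le hj with hje | hjl
        · rw [hco]
          rw [← hje, hpacr, ← hcr]
          simp only [Pi.sub_apply, Pi.mul_apply]
          ring
        · rw [hco]
          rw [hpahi j hjl, coeff_eq_zero_of_natDegree_lt (lt_of_le_of_lt hPnd hjl)]
          simp
      have hallJ := hMIN ga hgag hgaV hgahi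
      intro x hxY t
      have hco0 : ∀ j, ga.coeff j x = 0 :=
        fun j => keyY _ (hgag j) (fun s hs => hallJ j s hs) x hxY
      have h0 : (fev ga x).eval t = 0 := by
        rw [fev_zero_of_coeffs hco0]
        simp
      have hexp : (fev ga x).eval t = cr (x + a.1) * (fev P x).eval t -
          cr x * (fev P (x + a.1)).eval (t + a.2) := by
        rw [hga, fev_sub, fev_C_mul, fev_C_mul, eval_sub, eval_mul, eval_mul,
          eval_C, eval_C, hpaev x t]
      rw [hexp] at h0
      exact sub_eq_zero.mp h0
    -- basic degree facts
    have hdegP : ∀ x : B₀, cr x ≠ 0 → fev P x ≠ 0 ∧ (fev P x).natDegree = r := by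
      intro x hcx
      have hcoeffr : (fev P x).coeff r = cr x := by rw [fev_coeff, hcr]
      have hne : fev P x ≠ 0 := by
        intro h
        rw [h] at hcoeffr
        exact hcx (by simpa using hcoeffr.symm)
      refine ⟨hne, le_antisymm ?_ ?_⟩
      · apply natDegree_le_iff_coeff_eq_zero.mpr
        intro m hm
        rw [fev_coeff, coeff_eq_zero_of_natDegree_lt (lt_of_le_of_lt hPnd hm)]
        rfl
      · exact le_natDegree_of_ne_zero (by rw [hcoeffr]; exact hcx)
    -- Claim A
    have hClaimA : ∀ z ∈ CL K S, cr z ≠ 0 → z ∈ S := by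
      intro z hzY hcz
      by_contra hzS
      have hcrS' := hcrS
      push_neg at hcrS'
      obtain ⟨u₀, hu₀S, hu₀c⟩ := hcrS'
      obtain ⟨⟨u₀x, w₀t⟩, hw₀V, hw₀1⟩ := hu₀S
      simp only at hw₀1
      subst hw₀1
      -- the finite set of root offsets
      have hDfin : {δ : K | (fev P u₀x).eval (w₀t + δ) = 0}.Finite := by
        have hfin0 : {t : K | (fev P u₀x).IsRoot t}.Finite :=
          finite_setOf_isRoot (hdegP u₀x hu₀c).1
        have : {δ : K | (fev P u₀x).eval (w₀t + δ) = 0} =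
            (fun δ => w₀t + δ) ⁻¹' {t : K | (fev P u₀x).IsRoot t} := rfl
        rw [this]
        exact Set.Finite.preimage ((add_right_injective w₀t).injOn) hfin0
      -- Key A: all roots over good points of S are translates of V
      have hKeyA : ∀ x, x ∈ S → cr x ≠ 0 → ∀ t, (fev P x).eval t = 0 →
          ∃ δ ∈ hDfin.toFinset, ((x, t) - ((0 : B₀), δ)) ∈ V := by
        intro x hxS hcx t ht
        obtain ⟨⟨wx, wt⟩, hwV, hw1⟩ := hxS
        simp only at hw1
        subst hw1
        have haV : ((u₀x, w₀t) - (wx, wt)) ∈ V := hVsub.sub_mem hw₀V hwV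
        have hid := hIDY _ haV wx (hSY ⟨(wx, wt), hwV, rfl⟩) t
        simp only [Prod.fst_sub, Prod.snd_sub] at hid
        have h1 : wx + ((u₀x, w₀t).1 - (wx, wt).1) = u₀x := by
          simp
        rw [show ((u₀x, w₀t).1 - (wx, wt).1) = u₀x - wx by rfl,
          show ((u₀x, w₀t).2 - (wx, wt).2) = w₀t - wt by rfl] at hid
        rw [show wx + (u₀x - wx) = u₀x by abel] at hid
        rw [ht, mul_zero] at hid
        have h2 : (fev P u₀x).eval (t + (w₀t - wt)) = 0 := by
          rcases mul_eq_zero.mp hid.symm with h | h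
          · exact absurd h hcx
          · exact h
        refine ⟨t - wt, ?_, ?_⟩
        · rw [Set.Finite.mem_toFinset]
          show (fev P u₀x).eval (w₀t + (t - wt)) = 0
          rw [show w₀t + (t - wt) = t + (w₀t - wt) by ring]
          exact h2
        · rw [show ((wx, t) - ((0 : B₀), t - wt)) = (wx, wt) by
            rw [Prod.mk_sub_mk]; congr 1 <;> abel]
          exact hwV
      -- fibers over z are empty
      have hzfib : ∀ (δ t : K), ((z, t) - ((0 : B₀), δ)) ∈ V → False := by
        intro δ t hmem
        exact hzS ⟨_, hmem, by simp⟩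
      -- a root over z
      have hπz := hdegP z hcz
      obtain ⟨t₁, ht₁⟩ := IsAlgClosed.exists_root (fev P z) (by
        rw [degree_eq_natDegree hπz.1, hπz.2]
        simp only [ne_eq, Nat.cast_eq_zero]
        omega)
      have ht₁' : (fev P z).eval t₁ = 0 := ht₁
      -- separating functions
      have hsep : ∀ δ ∈ hDfin.toFinset, ∃ g, g ∈ PolyFun K (B₀ × K) ∧
          (∀ a ∈ G, g a = 0) ∧ g ((z, t₁) - ((0 : B₀), δ)) ≠ 0 := by
        intro δ hδ
        have hnot : ((z, t₁) - ((0 : B₀), δ)) ∉ V := fun h => hzfib δ t₁ h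
        by_contra hcc
        push_neg at hcc
        apply hnot
        intro f hf hvan
        exact hcc f hf hvan
      choose gfun hgP hgvan hgne using hsep
      -- the product separating function
      set hfun : B₀ × K → K :=
        fun w => ∏ δ ∈ hDfin.toFinset.attach, gfun δ.1 δ.2 (w - ((0 : B₀), δ.1)) with hhfun
      have hhP : hfun ∈ PolyFun K (B₀ × K) := by
        have heq : hfun = ∏ δ ∈ hDfin.toFinset.attach,
            (fun w : B₀ × K => gfun δ.1 δ.2 (w - ((0 : B₀), δ.1))) := by
          funext w
          rw [hhfun, Finset.prod_apply]
        rw [heq]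
        refine prod_mem (fun δ _ => ?_)
        have := affine_comp_mem_polyFun (hgP δ.1 δ.2)
          (LinearMap.id (R := K) (M := B₀ × K)) (-((0 : B₀), δ.1))
        simpa [sub_eq_add_neg] using this
      have hhZ : ∀ x t δ, δ ∈ hDfin.toFinset → ((x, t) - ((0 : B₀), δ)) ∈ V →
          hfun (x, t) = 0 := by
        intro x t δ hδ hmem
        rw [hhfun]
        refine Finset.prod_eq_zero (Finset.mem_attach _ ⟨δ, hδ⟩) ?_
        exact vanish_CL (hgP δ hδ) (hgvan δ hδ) _ hmem
      have hht₁ : hfun (z, t₁) ≠ 0 := by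
        rw [hhfun]
        exact Finset.prod_ne_zero_iff.mpr (fun δ _ => hgne δ.1 δ.2)
      -- representation of hfun
      obtain ⟨q, hqg, hqe⟩ := polyFun_prod_rep hhP
      -- lift to polynomials over the subalgebra of polynomial functions
      set Phat : Polynomial (PolyFun K B₀) :=
        ∑ j ∈ Finset.range (r + 1), Polynomial.C (⟨P.coeff j, hPg j⟩ : PolyFun K B₀) *
          Polynomial.X ^ j with hPhat
      set Qhat : Polynomial (PolyFun K B₀) :=
        ∑ j ∈ Finset.range (q.natDegree + 1), Polynomial.C (⟨q.coeff j, hqg j⟩ : PolyFun K B₀) *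
          Polynomial.X ^ j with hQhat
      have hPhatco : ∀ m, Phat.coeff m =
          if m < r + 1 then (⟨P.coeff m, hPg m⟩ : PolyFun K B₀) else 0 := by
        intro m; rw [hPhat]; exact sumC_coeff _ _ m
      have hQhatco : ∀ m, Qhat.coeff m =
          if m < q.natDegree + 1 then (⟨q.coeff m, hqg m⟩ : PolyFun K B₀) else 0 := by
        intro m; rw [hQhat]; exact sumC_coeff _ _ m
      have hPhatnd : Phat.natDegree ≤ r := by
        apply natDegree_le_iff_coeff_eq_zero.mpr
        intro m hm
        rw [hPhatco m]
        have hmr : ¬ (m < r + 1) := by omega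
        simp [hmr]
      set χ : B₀ → (PolyFun K B₀ →+* K) :=
        fun x => (Pi.evalRingHom (fun _ : B₀ => K) x).comp (PolyFun K B₀).val.toRingHom with hχ
      have hχap : ∀ (x : B₀) (c : PolyFun K B₀), χ x c = (c : B₀ → K) x := fun _ _ => rfl
      have hmapPhat : ∀ x : B₀, Phat.map (χ x) = fev P x := by
        intro x
        ext j
        rw [coeff_map, fev_coeff, hPhatco j]
        by_cases hj : j < r + 1
        · simp only [hj, if_true]
          rw [hχap]
        · have hPj : P.coeff j = 0 := coeff_eq_zero_of_natDegree_lt (by omega)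
          simp [hj, hPj]
      have hmapQhat : ∀ x : B₀, Qhat.map (χ x) = fev q x := by
        intro x
        ext j
        rw [coeff_map, fev_coeff, hQhatco j]
        by_cases hj : j < q.natDegree + 1
        · simp only [hj, if_true]
          rw [hχap]
        · have hqj : q.coeff j = 0 := coeff_eq_zero_of_natDegree_lt (by omega)
          simp [hj, hqj]
      have hPhatcr : Phat.coeff r = (⟨cr, hcrP⟩ : PolyFun K B₀) := by
        rw [hPhatco r]
        simp [hcr]
      obtain ⟨N, Qq, rem, heqn, hremdeg⟩ := pseudo_div Phat hr1 hPhatnd (Qhat ^ r)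
      have hmapid : ∀ x : B₀, Polynomial.C (cr x) ^ N * (fev q x) ^ r =
          (Qq.map (χ x)) * fev P x + rem.map (χ x) := by
        intro x
        have hmap := congrArg (Polynomial.map (χ x)) heqn
        rw [Polynomial.map_add, Polynomial.map_mul, Polynomial.map_mul, Polynomial.map_pow,
          Polynomial.map_pow, map_C, hmapPhat, hmapQhat, hPhatcr] at hmap
        exact hmap
      have hremS : ∀ j, ∀ x ∈ S, cr x * ((rem.coeff j : B₀ → K)) x = 0 := by
        intro j x hxS
        by_cases hcx : cr x = 0
        · rw [hcx, zero_mul]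
        · have hroots : ∀ ρ : K, (fev P x).IsRoot ρ → (fev q x).IsRoot ρ := by
            intro ρ hρ
            obtain ⟨δ, hδ, hmem⟩ := hKeyA x hxS hcx ρ hρ
            have h0 : hfun (x, ρ) = 0 := hhZ x ρ δ hδ hmem
            show (fev q x).eval ρ = 0
            rw [← hqe x ρ]
            exact h0
          have hdeg := hdegP x hcx
          have hdvd1 : fev P x ∣ (fev q x) ^ r := by
            rw [← hdeg.2]
            exact dvd_pow_of_roots_subset hdeg.1 hroots
          have hdvd2 : fev P x ∣ rem.map (χ x) := by
            have hre : rem.map (χ x) = Polynomial.C (cr x) ^ N * (fev q x) ^ r -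
                (Qq.map (χ x)) * fev P x := by
              rw [hmapid x]; ring
            rw [hre]
            exact dvd_sub (hdvd1.mul_left _) (dvd_mul_left _ _)
          have hrem0 : rem.map (χ x) = 0 := by
            apply eq_zero_of_dvd_of_natDegree_lt' hdvd2
            calc (rem.map (χ x)).natDegree ≤ rem.natDegree := natDegree_map_le
            _ < r := hremdeg
            _ = (fev P x).natDegree := hdeg.2.symm
          have hcoeffj : ((rem.coeff j : B₀ → K)) x = 0 := by
            have hco := congrArg (fun p : Polynomial K => p.coeff j) hrem0
            simpa [coeff_map, hχap] using hco
          rw [hcoeffj, mul_zero]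
      have hremz : rem.map (χ z) = 0 := by
        ext j
        rw [coeff_map]
        have hmem : (fun u : B₀ => cr u * ((rem.coeff j : B₀ → K)) u) ∈ PolyFun K B₀ := by
          have h1 : (fun u : B₀ => cr u * ((rem.coeff j : B₀ → K)) u) =
              cr * ((rem.coeff j : B₀ → K)) := rfl
          rw [h1]
          exact mul_mem hcrP (rem.coeff j).2
        have hvz := keyY _ hmem (fun x hxS => hremS j x hxS) z hzY
        have hz0 : ((rem.coeff j : B₀ → K)) z = 0 := by
          rcases mul_eq_zero.mp hvz with h | h
          · exact absurd h hcz
          · exact h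
        rw [hχap]
        simpa using hz0
      have hfinal := hmapid z
      rw [hremz, add_zero] at hfinal
      have heval := congrArg (Polynomial.eval t₁) hfinal
      rw [eval_mul, eval_mul, eval_pow, eval_pow, eval_C, ht₁', mul_zero] at heval
      have hlhs : (cr z) ^ N * ((fev q z).eval t₁) ^ r ≠ 0 := by
        apply mul_ne_zero (pow_ne_zero _ hcz)
        apply pow_ne_zero
        rw [← hqe z t₁]
        exact hht₁
      exact hlhs heval
    -- the finisher: reduce to Claim A
    have hyc : ¬ ∀ u ∈ S, cr (y - u) = 0 := by
      intro hvanc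
      have hmemc : (fun u : B₀ => cr (y - u)) ∈ PolyFun K B₀ := by
        have := affine_comp_mem_polyFun hcrP (-(LinearMap.id (R := K) (M := B₀))) y
        simpa [sub_eq_neg_add] using this
      have hvanY := keyY _ hmemc hvanc
      apply hcrS
      intro u huS
      have h1 : y - u ∈ CL K S := hYsub.sub_mem hyY (hSY huS)
      have h2 := hvanY _ h1
      simpa [sub_sub_cancel] using h2
    push_neg at hyc
    obtain ⟨v, hvS, hvne⟩ := hyc
    have hzY : y - v ∈ CL K S := hYsub.sub_mem hyY (hSY hvS)
    have hzmem : y - v ∈ S := hClaimA _ hzY hvne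
    have hfin : (y - v) + v ∈ S := hSsub.2.1 _ hzmem _ hvS
    simpa using hfin


open Polynomial

theorem hard_case {K : Type*} [Field K] [IsAlgClosed K] {B' : Type*} [AddCommGroup B']
    [Module K B'] [FiniteDimensional K B'] :
    ∀ (n : ℕ) (B : Type u_b) [AddCommGroup B] [Module K B] [FiniteDimensional K B],
      Module.finrank K B = n → ∀ (ψ : B →ₗ[K] B') (G : Set B), Sub3 G →
      CL K (⇑ψ '' G) ⊆ ⇑ψ '' CL K G := by
  intro n
  induction n using Nat.strong_induction_on with
  | _ n IH =>
    intro B _ _ _ hrank ψ G hG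
    by_cases hker : LinearMap.ker ψ = ⊥
    · exact injective_case ψ (LinearMap.ker_eq_bot.mp hker) G
    · obtain ⟨v, hvker, hv0⟩ := (Submodule.ne_bot_iff _).mp hker
      obtain ⟨W, hW⟩ := Submodule.exists_isCompl (K ∙ v)
      set e₁ : (W × (K ∙ v)) ≃ₗ[K] B := Submodule.prodEquivOfIsCompl W (K ∙ v) hW.symm
        with he₁
      set e₂ : (W × K) ≃ₗ[K] (W × (K ∙ v)) := (LinearEquiv.refl K W).prodCongr
        (LinearEquiv.toSpanNonzeroSingleton K B v hv0) with he₂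
      set E : (W × K) ≃ₗ[K] B := e₂.trans e₁ with hE
      have hEap : ∀ (w : W) (t : K), E (w, t) = (w : B) + t • v := by
        intro w t
        rw [hE, he₂, he₁]
        simp [Submodule.coe_prodEquivOfIsCompl', LinearEquiv.prodCongr_apply]
      have hE0 : ∀ t : K, ψ (E (0, t)) = 0 := by
        intro t
        rw [hEap 0 t]
        have hψv : ψ v = 0 := LinearMap.mem_ker.mp hvker
        simp [map_smul, hψv]
      set ψbar : W →ₗ[K] B' := (ψ.comp E.toLinearMap).comp (LinearMap.inl K W K) with hψbar
      have hfact : ∀ p : W × K, ψ (E p) = ψbar p.1 := by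
        rintro ⟨w, t⟩
        show ψ (E (w, t)) = ψbar w
        have hsplit : ((w, t) : W × K) = (w, 0) + (0, t) := by simp
        rw [hsplit, map_add, map_add, hE0 t, add_zero]
        rfl
      -- rank bookkeeping
      have h1 : Module.finrank K (K ∙ v) = 1 := finrank_span_singleton hv0
      have h2 : Module.finrank K (K ∙ v) + Module.finrank K W = n := by
        rw [← hrank]
        exact Submodule.finrank_add_eq_of_isCompl hW
      have hWlt : Module.finrank K W < n := by omega
      -- transported subgroup
      have hG₂ : Sub3 (⇑E.symm '' G) := by
        have := hG.image E.symm.toLinearMap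
        simpa using this
      have hG₃ : Sub3 (Prod.fst '' (⇑E.symm '' G)) := by
        have := hG₂.image (LinearMap.fst K W K)
        simpa using this
      -- the chain
      have hψE : ∀ b : B, ψbar (E.symm b).1 = ψ b := by
        intro b
        rw [← hfact (E.symm b), LinearEquiv.apply_symm_apply]
      have hstep1 : ⇑ψ '' G = ⇑ψbar '' (Prod.fst '' (⇑E.symm '' G)) := by
        rw [Set.image_image, Set.image_image]
        exact (Set.image_congr (fun b _ => (hψE b).symm))
      have hIH : CL K (⇑ψbar '' (Prod.fst '' (⇑E.symm '' G))) ⊆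
          ⇑ψbar '' CL K (Prod.fst '' (⇑E.symm '' G)) :=
        IH _ hWlt W rfl ψbar _ hG₃
      have hproj : Prod.fst '' CL K (⇑E.symm '' G) = CL K (Prod.fst '' (⇑E.symm '' G)) :=
        fst_image_CL _ hG₂
      have hback : ⇑ψbar '' (Prod.fst '' CL K (⇑E.symm '' G)) = ⇑ψ '' CL K G := by
        rw [CL_image_equiv E.symm G, Set.image_image, Set.image_image]
        exact (Set.image_congr (fun b _ => hψE b))
      intro x hx
      rw [hstep1] at hx
      have hx2 := hIH hx
      rw [← hproj, hback] at hx2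
      exact hx2

/-- Main closure-image theorem. -/
theorem CL_image {K : Type*} [Field K] [IsAlgClosed K] {B B' : Type*}
    [AddCommGroup B] [Module K B] [FiniteDimensional K B]
    [AddCommGroup B'] [Module K B'] [FiniteDimensional K B']
    (ψ : B →ₗ[K] B') (G : Set B) (hG : Sub3 G) :
    ⇑ψ '' CL K G = CL K (⇑ψ '' G) :=
  Set.Subset.antisymm (image_CL_subset ψ G)
    (hard_case (Module.finrank K B) B rfl ψ G hG)



lemma zcl_bridge {K B : Type*} [Field K] [AddCommGroup B] [Module K B] {n : ℕ}
    (β : Module.Basis (Fin n) K B) (A : Set B) :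
    {x | ∀ f : MvPolynomial (Fin n) K,
      (∀ a ∈ A, MvPolynomial.eval (fun i => β.repr a i) f = 0) →
        MvPolynomial.eval (fun i => β.repr x i) f = 0} = CL K A := by
  classical
  set c : Fin n → (B → K) := fun i x => β.repr x i with hc
  set Φ : MvPolynomial (Fin n) K →ₐ[K] (B → K) := MvPolynomial.aeval c with hΦ
  have heval : ∀ (F : MvPolynomial (Fin n) K) (x : B),
      Φ F x = MvPolynomial.eval (fun i => β.repr x i) F := by
    intro F x
    have hcomp := MvPolynomial.comp_aeval (R := K) (φ := Pi.evalAlgHom K (fun _ : B => K) x)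
      (f := c)
    have h1 : (Pi.evalAlgHom K (fun _ : B => K) x) (Φ F) =
        (MvPolynomial.aeval fun i => c i x) F := by
      rw [hΦ]
      exact congrFun (congrArg (fun (g : MvPolynomial (Fin n) K →ₐ[K] K) => ⇑g) hcomp) F
    have h2 : (MvPolynomial.aeval fun i => c i x) F =
        MvPolynomial.eval (fun i => β.repr x i) F := by
      rw [MvPolynomial.aeval_def]
      have hid : algebraMap K K = RingHom.id K := rfl
      rw [hid, MvPolynomial.eval₂_id]
    exact h1.trans h2
  have hci : ∀ i, c i ∈ PolyFun K B := by
    intro i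
    have hlin : c i = ⇑(β.coord i) := by
      funext x
      rw [hc]
      rw [Module.Basis.coord_apply]
    rw [hlin]
    exact linear_mem_polyFun _
  have hr1 : ∀ F : MvPolynomial (Fin n) K, Φ F ∈ PolyFun K B := by
    intro F
    induction F using MvPolynomial.induction_on with
    | C a =>
        rw [hΦ, MvPolynomial.aeval_C]
        exact Subalgebra.algebraMap_mem _ a
    | add p q hp hq =>
        rw [map_add]
        exact add_mem hp hq
    | mul_X p i hp =>
        rw [map_mul]
        refine mul_mem hp ?_
        rw [hΦ, MvPolynomial.aeval_X]
        exact hci i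
  have hr2 : ∀ g, g ∈ PolyFun K B → ∃ F, Φ F = g := by
    have hle : PolyFun K B ≤ Φ.range := by
      apply Algebra.adjoin_le
      intro g hg
      have hglin : IsLinearMap K g := hg
      set ℓ := IsLinearMap.mk' g hglin with hℓ
      refine ⟨∑ i, MvPolynomial.C (ℓ (β i)) * MvPolynomial.X i, ?_⟩
      show Φ (∑ i, MvPolynomial.C (ℓ (β i)) * MvPolynomial.X i) = g
      funext x
      rw [heval]
      have hev : MvPolynomial.eval (fun i => β.repr x i)
          (∑ i, MvPolynomial.C (ℓ (β i)) * MvPolynomial.X i) =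
          ∑ i, ℓ (β i) * β.repr x i := by
        rw [map_sum]
        refine Finset.sum_congr rfl (fun i _ => ?_)
        simp
      rw [hev]
      have hx : g x = ℓ x := rfl
      rw [hx]
      conv_rhs => rw [← Module.Basis.sum_repr β x]
      rw [map_sum]
      refine Finset.sum_congr rfl (fun i _ => ?_)
      rw [map_smul]
      simp [mul_comm]
    intro g hg
    exact hle hg
  ext x
  simp only [Set.mem_setOf_eq]
  constructor
  · intro hx f hf hvan
    obtain ⟨F, rfl⟩ := hr2 f hf
    rw [heval]
    apply hx F
    intro a ha
    rw [← heval]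
    exact hvan a ha
  · intro hx F hvan
    have h1 := hx (Φ F) (hr1 F) (fun a ha => by rw [heval]; exact hvan a ha)
    rw [heval] at h1
    exact h1

end ZCL

/-- for a `K`-linear map `ψ : B → B'` and an `F`-subspace `A` of `B`,
`ψ(cl(A)) = cl(ψ(A))`; in particular, the image under `ψ` of a Zariski-closed `F`-subspace
of `B` is Zariski-closed in `B'`. -/
theorem stmt_4 {K F B B' : Type*} [Field K] [IsAlgClosed K] [Field F] [Algebra F K]
    [AddCommGroup B] [Module K B] [Module F B] [IsScalarTower F K B]
    [AddCommGroup B'] [Module K B']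
    {n n' : ℕ} (β : Module.Basis (Fin n) K B) (β' : Module.Basis (Fin n') K B')
    (ψ : B →ₗ[K] B') (A : Set B)
    (h0 : (0 : B) ∈ A)
    (hadd : ∀ x ∈ A, ∀ y ∈ A, x + y ∈ A)
    (hsmul : ∀ (c : F), ∀ x ∈ A, c • x ∈ A) :
    ψ '' (zcl β A) = zcl β' (ψ '' A) ∧
      (zcl β A = A → zcl β' (ψ '' A) = ψ '' A) := by
  have hfb : Module.Finite K B := Module.Finite.of_basis β
  have hfb' : Module.Finite K B' := Module.Finite.of_basis β'
  have hneg : ∀ x ∈ A, -x ∈ A := by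
    intro x hx
    have h := hsmul (-1) x hx
    rwa [neg_one_smul] at h
  have hA : ZCL.Sub3 A := ⟨h0, hadd, hneg⟩
  have hmain : ⇑ψ '' (ZCL.CL K A) = ZCL.CL K (⇑ψ '' A) := ZCL.CL_image ψ A hA
  have hb1 : zcl β A = ZCL.CL K A := ZCL.zcl_bridge β A
  have hb2 : zcl β' (⇑ψ '' A) = ZCL.CL K (⇑ψ '' A) := ZCL.zcl_bridge β' _
  constructor
  · rw [hb1, hb2]
    exact hmain
  · intro hAA
    rw [hb2, ← hmain, ← hb1, hAA]
end

section
/- Let B be a finite-dimensional unital associative K-algebra and let A be an F-subalgebra of B. Then A and its Zariski closure cl(A) satisfy exactly the same polynomial identities over F: an element f of the free associative F-algebra F⟨x₁,x₂,…⟩ is a polynomial identity of A if and only if it is a polynomial identity of cl(A). -/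
def IsPolyMap {K B : Type*} [Field K] [AddCommGroup B] [Module K B] {n : ℕ}
    (β : Module.Basis (Fin n) K B) (g : B → B) : Prop :=
  ∀ i : Fin n, ∃ p : MvPolynomial (Fin n) K,
    ∀ x, β.repr (g x) i = MvPolynomial.eval (fun j => β.repr x j) p

section PolyMap
variable {K B : Type*} [Field K] [AddCommGroup B] [Module K B] {n : ℕ}
  {β : Module.Basis (Fin n) K B}

lemma isPolyMap_const (c : B) : IsPolyMap β (fun _ => c) :=
  fun i => ⟨MvPolynomial.C (β.repr c i), fun x => by simp⟩

lemma isPolyMap_id : IsPolyMap β (fun x => x) :=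
  fun i => ⟨MvPolynomial.X i, fun x => by simp⟩

lemma IsPolyMap.add {g h : B → B} (hg : IsPolyMap β g) (hh : IsPolyMap β h) :
    IsPolyMap β (fun x => g x + h x) := by
  intro i
  obtain ⟨p, hp⟩ := hg i
  obtain ⟨q, hq⟩ := hh i
  exact ⟨p + q, fun x => by simp [map_add, hp x, hq x]⟩

end PolyMap

lemma IsPolyMap.mul {K B : Type*} [Field K] [Ring B] [Algebra K B] {n : ℕ}
    {β : Module.Basis (Fin n) K B} {g h : B → B}
    (hg : IsPolyMap β g) (hh : IsPolyMap β h) : IsPolyMap β (fun x => g x * h x) := by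
  choose P hP using hg
  choose Q hQ using hh
  intro i
  refine ⟨∑ j : Fin n, ∑ k : Fin n, P j * Q k * MvPolynomial.C (β.repr (β j * β k) i),
    fun x => ?_⟩
  have key : g x * h x = ∑ j : Fin n, ∑ k : Fin n,
      (β.repr (g x) j * β.repr (h x) k) • (β j * β k) := by
    conv_lhs => rw [← β.sum_repr (g x), ← β.sum_repr (h x)]
    rw [Finset.sum_mul]
    refine Finset.sum_congr rfl fun j _ => ?_
    rw [Finset.mul_sum]
    refine Finset.sum_congr rfl fun k _ => ?_
    rw [smul_mul_smul_comm]
  show β.repr (g x * h x) i = _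
  rw [key]
  simp only [map_sum, map_smul, Finsupp.coe_finset_sum, Finset.sum_apply,
    Finsupp.coe_smul, Pi.smul_apply, smul_eq_mul, map_mul]
  refine Finset.sum_congr rfl fun j _ => Finset.sum_congr rfl fun k _ => ?_
  rw [hP j x, hQ k x, MvPolynomial.eval_C]

lemma polyMap_zero_of_zcl {K B : Type*} [Field K] [AddCommGroup B] [Module K B] {n : ℕ}
    {β : Module.Basis (Fin n) K B} {g : B → B} (hg : IsPolyMap β g) {A : Set B}
    (hA : ∀ a ∈ A, g a = 0) : ∀ x ∈ zcl β A, g x = 0 := by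
  intro x hx
  have hz : ∀ i, β.repr (g x) i = 0 := by
    intro i
    obtain ⟨p, hp⟩ := hg i
    rw [hp]
    exact hx p (fun a ha => by rw [← hp, hA a ha, map_zero]; rfl)
  have : β.repr (g x) = 0 := Finsupp.ext hz
  simpa using β.repr.map_eq_zero_iff.mp this

section Main
variable {K F B : Type*} [Field K] [Field F] [Algebra F K]
  [Ring B] [Algebra K B] [Algebra F B] {n : ℕ}

lemma lift_update_polyMap (β : Module.Basis (Fin n) K B) (f : FreeAlgebra F ℕ) (σ : ℕ → B) (m : ℕ) :
    IsPolyMap β (fun x => FreeAlgebra.lift F (Function.update σ m x) f) := by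
  induction f using FreeAlgebra.induction with
  | grade0 r => simpa using isPolyMap_const (β := β) (algebraMap F B r)
  | grade1 j =>
      by_cases hj : j = m
      · subst hj
        simpa [FreeAlgebra.lift_ι_apply] using isPolyMap_id (β := β)
      · simpa [FreeAlgebra.lift_ι_apply, Function.update_of_ne hj] using
          isPolyMap_const (β := β) (σ j)
  | add a b ha hb => simpa [map_add] using ha.add hb
  | mul a b ha hb => simpa [map_mul] using ha.mul hb

lemma lift_depends (f : FreeAlgebra F ℕ) :
    ∃ m : ℕ, ∀ σ τ : ℕ → B, (∀ i, i < m → σ i = τ i) →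
      FreeAlgebra.lift F σ f = FreeAlgebra.lift F τ f := by
  induction f using FreeAlgebra.induction with
  | grade0 r => exact ⟨0, fun σ τ _ => by simp⟩
  | grade1 j =>
      exact ⟨j + 1, fun σ τ h => by
        simp [FreeAlgebra.lift_ι_apply, h j (Nat.lt_succ_self j)]⟩
  | add a b ha hb =>
      obtain ⟨m1, h1⟩ := ha
      obtain ⟨m2, h2⟩ := hb
      exact ⟨max m1 m2, fun σ τ h => by
        simp [map_add,
          h1 σ τ (fun i hi => h i (lt_of_lt_of_le hi (le_max_left _ _))),
          h2 σ τ (fun i hi => h i (lt_of_lt_of_le hi (le_max_right _ _)))]⟩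
  | mul a b ha hb =>
      obtain ⟨m1, h1⟩ := ha
      obtain ⟨m2, h2⟩ := hb
      exact ⟨max m1 m2, fun σ τ h => by
        simp [map_mul,
          h1 σ τ (fun i hi => h i (lt_of_lt_of_le hi (le_max_left _ _))),
          h2 σ τ (fun i hi => h i (lt_of_lt_of_le hi (le_max_right _ _)))]⟩

end Main

/-- an `F`-subalgebra `A` of `B` and its Zariski closure `cl(A)` satisfy
exactly the same polynomial identities over `F`: an element `f` of the free associative
`F`-algebra `F⟨x₁,x₂,…⟩` is a polynomial identity of `A` iff it is one of `cl(A)`. -/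
theorem stmt_5 {K F B : Type*} [Field K] [IsAlgClosed K] [Field F] [Algebra F K]
    [Ring B] [Algebra K B] [Algebra F B] [IsScalarTower F K B]
    {n : ℕ} (β : Module.Basis (Fin n) K B) (A : Set B)
    (h1 : (1 : B) ∈ A)
    (hadd : ∀ x ∈ A, ∀ y ∈ A, x + y ∈ A)
    (hsmul : ∀ (c : F), ∀ x ∈ A, c • x ∈ A)
    (hmul : ∀ x ∈ A, ∀ y ∈ A, x * y ∈ A) :
    ∀ f : FreeAlgebra F ℕ,
      ((∀ σ : ℕ → B, (∀ i, σ i ∈ A) → FreeAlgebra.lift F σ f = 0) ↔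
        (∀ σ : ℕ → B, (∀ i, σ i ∈ zcl β A) → FreeAlgebra.lift F σ f = 0)) := by
  intro f
  constructor
  · intro hf σ hσ
    -- A ⊆ zcl β A would give the other direction; here: cl direction
    have key : ∀ m : ℕ, ∀ τ : ℕ → B, (∀ i, i < m → τ i ∈ zcl β A) →
        (∀ i, m ≤ i → τ i ∈ A) → FreeAlgebra.lift F τ f = 0 := by
      intro m
      induction m with
      | zero => exact fun τ _ hA => hf τ (fun i => hA i (Nat.zero_le i))
      | succ m ih =>
          intro τ hcl hA
          have hg : IsPolyMap β (fun x => FreeAlgebra.lift F (Function.update τ m x) f) :=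
            lift_update_polyMap β f τ m
          have hvan : ∀ a ∈ A, FreeAlgebra.lift F (Function.update τ m a) f = 0 := by
            intro a ha
            refine ih _ (fun i hi => ?_) (fun i hi => ?_)
            · rw [Function.update_of_ne (Nat.ne_of_lt hi)]
              exact hcl i (Nat.lt_succ_of_lt hi)
            · rcases Nat.eq_or_lt_of_le hi with h | h
              · rw [← h, Function.update_self]; exact ha
              · rw [Function.update_of_ne (Nat.ne_of_gt h)]
                exact hA i h
          have := polyMap_zero_of_zcl hg hvan (τ m) (hcl m (Nat.lt_succ_self m))
          simpa [Function.update_eq_self] using this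
    obtain ⟨m, hm⟩ := lift_depends (B := B) f
    have h1cl : ∀ i, (fun i => if i < m then σ i else 1) i ∈ zcl β A ∨ True := fun _ => Or.inr trivial
    rw [hm σ (fun i => if i < m then σ i else 1) (fun i hi => by simp [hi])]
    refine key m _ (fun i hi => by simpa [hi] using hσ i) (fun i hi => ?_)
    simp [Nat.not_lt.mpr hi, h1]
  · intro hf σ hσ
    refine hf σ (fun i => ?_)
    intro p hp
    exact hp (σ i) (hσ i)
end

section
/- Let A be a submonoid of K^n under coordinatewise multiplication (with identity element (1,…,1)) which is Zariski-closed. Then the ideal poly(A) of polynomial relations of A is generated by polynomial relations of the following two forms: products of variables λ_{i₁}⋯λ_{i_t}, and differences of monomials λ₁^{i₁}⋯λ_n^{i_n} − λ₁^{j₁}⋯λ_n^{j_n} (with nonnegative integer exponents) that vanish on A. -/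
/-- The ideal `poly(A)` of polynomial relations of a subset `A ⊆ K^n`. -/
def polyIdeal {K : Type*} [Field K] {n : ℕ} (A : Set (Fin n → K)) :
    Ideal (MvPolynomial (Fin n) K) where
  carrier := {f | ∀ a ∈ A, MvPolynomial.eval a f = 0}
  zero_mem' := by intro a _; simp
  add_mem' := by intro f g hf hg a ha; simp [hf a ha, hg a ha]
  smul_mem' := by intro c f hf a ha; simp [hf a ha]

open MvPolynomial in
lemma monomial_one_eq_prod {K : Type*} [Field K] {n : ℕ} (d : Fin n →₀ ℕ) :
    (monomial d (1 : K)) = ∏ i : Fin n, X i ^ d i := by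
  have h := MvPolynomial.prod_X_pow_eq_monomial (s := d) (R := K)
  rw [← h]
  refine (Finset.prod_subset (f := fun i => (X i ^ d i : MvPolynomial (Fin n) K))
    (Finset.subset_univ _) fun i _ hi => ?_)
  rw [Finsupp.notMem_support_iff.mp hi, pow_zero]

/-- for a Zariski-closed submonoid `A` of `K^n` under coordinatewise
multiplication (with identity `(1,…,1)`), the ideal `poly(A)` is generated by the
relations of the forms `λ_{i₁}⋯λ_{i_t}` and `λ₁^{i₁}⋯λ_n^{i_n} − λ₁^{j₁}⋯λ_n^{j_n}`
(nonnegative integer exponents) that vanish on `A`. -/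
theorem stmt_17 {K : Type*} [Field K] [IsAlgClosed K] {n : ℕ} (A : Set (Fin n → K))
    (hone : (1 : Fin n → K) ∈ A)
    (hmul : ∀ x ∈ A, ∀ y ∈ A, x * y ∈ A)
    (hcl : ∀ x : Fin n → K, (∀ f ∈ polyIdeal A, MvPolynomial.eval x f = 0) → x ∈ A) :
    Ideal.span {f | f ∈ polyIdeal A ∧
        ((∃ l : List (Fin n), l ≠ [] ∧ f = (l.map MvPolynomial.X).prod) ∨
          (∃ d e : Fin n → ℕ,
            f = (∏ i : Fin n, MvPolynomial.X i ^ d i)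
                  - ∏ i : Fin n, MvPolynomial.X i ^ e i))}
      = polyIdeal A := by
  classical
  set S : Set (MvPolynomial (Fin n) K) := {f | f ∈ polyIdeal A ∧
        ((∃ l : List (Fin n), l ≠ [] ∧ f = (l.map MvPolynomial.X).prod) ∨
          (∃ d e : Fin n → ℕ,
            f = (∏ i : Fin n, MvPolynomial.X i ^ d i)
                  - ∏ i : Fin n, MvPolynomial.X i ^ e i))} with hS
  apply le_antisymm
  · rw [Ideal.span_le]; intro f hf; exact hf.1
  -- the submonoid
  set M : Submonoid (Fin n → K) :=
    { carrier := A
      one_mem' := hone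
      mul_mem' := fun {a b} ha hb => hmul a ha b hb } with hM
  -- characters
  set χ : (Fin n →₀ ℕ) → (M →* K) := fun d =>
    { toFun := fun x => ∏ i : Fin n, (x : Fin n → K) i ^ d i
      map_one' := by simp
      map_mul' := by
        intro x y
        simp [mul_pow, Finset.prod_mul_distrib] } with hχ
  have key : ∀ N : ℕ, ∀ f : MvPolynomial (Fin n) K, f.support.card = N →
      f ∈ polyIdeal A → f ∈ Ideal.span S := by
    intro N
    induction N using Nat.strong_induction_on with
    | _ N ih =>
      intro f hcard hfA
      rcases Finset.eq_empty_or_nonempty f.support with hs | ⟨d₀, hd₀⟩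
      · have : f = 0 := by
          rwa [← MvPolynomial.support_eq_empty]
        rw [this]; exact Ideal.zero_mem _
      -- the class of d₀
      set C : Finset (Fin n →₀ ℕ) := f.support.filter (fun d => χ d = χ d₀) with hC
      have hd₀C : d₀ ∈ C := by simp [hC, hd₀]
      -- linear independence argument
      have hli : LinearIndependent K (fun ψ : M →* K => (ψ : M → K)) :=
        linearIndependent_monoidHom M K
      set l : (M →* K) →₀ K :=
        ∑ d ∈ f.support, Finsupp.single (χ d) (f.coeff d) with hl
      have hltot : Finsupp.linearCombination K (fun ψ : M →* K => (ψ : M → K)) l = 0 := by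
        rw [hl, map_sum]
        simp only [Finsupp.linearCombination_single]
        funext x
        have hx : MvPolynomial.eval (x : Fin n → K) f = 0 := hfA _ x.2
        rw [MvPolynomial.eval_eq'] at hx
        simpa [hχ] using hx
      have hl0 : l = 0 := linearIndependent_iff.mp hli l hltot
      have hsum : ∑ d ∈ C, f.coeff d = 0 := by
        have := congrFun (congrArg (fun (l : (M →* K) →₀ K) => (l : (M →* K) → K)) hl0) (χ d₀)
        rw [hl] at this
        simp only [Finsupp.coe_zero, Pi.zero_apply, Finsupp.finset_sum_apply,
          Finsupp.single_apply] at this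
        rw [hC, Finset.sum_filter]
        simpa using this
      -- the binomials
      have hbinA : ∀ d ∈ C, (MvPolynomial.monomial d (1:K) - MvPolynomial.monomial d₀ 1)
          ∈ polyIdeal A := by
        intro d hd a ha
        have hdd : χ d = χ d₀ := (Finset.mem_filter.mp hd).2
        have := congrFun (congrArg (fun ψ : M →* K => (ψ : M → K)) hdd) ⟨a, ha⟩
        simp only [hχ, MonoidHom.coe_mk, OneHom.coe_mk] at this
        simp [monomial_one_eq_prod, MvPolynomial.eval_prod, this]
      have hbinS : ∀ d ∈ C, (MvPolynomial.monomial d (1:K) - MvPolynomial.monomial d₀ 1)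
          ∈ S := by
        intro d hd
        refine ⟨hbinA d hd, Or.inr ⟨d, d₀, ?_⟩⟩
        rw [monomial_one_eq_prod, monomial_one_eq_prod]
      set b : MvPolynomial (Fin n) K :=
        ∑ d ∈ C, f.coeff d • (MvPolynomial.monomial d (1:K) - MvPolynomial.monomial d₀ 1)
        with hb
      have hbspan : b ∈ Ideal.span S := by
        refine Submodule.sum_mem _ fun d hd => ?_
        rw [MvPolynomial.smul_eq_C_mul]
        exact Ideal.mul_mem_left _ _ (Ideal.subset_span (hbinS d hd))
      have hbA : b ∈ polyIdeal A := by
        refine Submodule.sum_mem _ fun d hd => ?_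
        rw [MvPolynomial.smul_eq_C_mul]
        exact Ideal.mul_mem_left _ _ (hbinA d hd)
      -- b equals the C-part of f
      have hb' : b = ∑ d ∈ C, MvPolynomial.monomial d (f.coeff d) := by
        rw [hb]
        simp only [smul_sub, Finset.sum_sub_distrib]
        have h1 : ∀ d ∈ C, f.coeff d • (MvPolynomial.monomial d (1:K))
            = MvPolynomial.monomial d (f.coeff d) := by
          intro d _; rw [MvPolynomial.smul_monomial, smul_eq_mul, mul_one]
        rw [Finset.sum_congr rfl h1]
        have h2 : ∑ d ∈ C, f.coeff d • (MvPolynomial.monomial d₀ (1:K))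
            = (∑ d ∈ C, f.coeff d) • MvPolynomial.monomial d₀ (1:K) := by
          rw [Finset.sum_smul]
        rw [h2, hsum, zero_smul, sub_zero]
      set g : MvPolynomial (Fin n) K := f - b with hg
      have hgA : g ∈ polyIdeal A := Submodule.sub_mem _ hfA hbA
      -- support of g
      have hgcoeff : ∀ e, g.coeff e = if e ∈ C then 0 else f.coeff e := by
        intro e
        rw [hg, hb', MvPolynomial.coeff_sub, MvPolynomial.coeff_sum]
        simp only [MvPolynomial.coeff_monomial]
        rw [Finset.sum_ite_eq' C e (fun d => f.coeff d)]
        by_cases he : e ∈ C <;> simp [he]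
      have hgsupp : g.support = f.support \ C := by
        ext e
        simp only [MvPolynomial.mem_support_iff, hgcoeff e, Finset.mem_sdiff,
          MvPolynomial.mem_support_iff]
        by_cases he : e ∈ C <;> simp [he]
      have hcard' : g.support.card < N := by
        rw [hgsupp, ← hcard]
        have : f.support \ C ⊂ f.support := by
          refine Finset.sdiff_ssubset ?_ ⟨d₀, hd₀C⟩
          intro d hd; exact (Finset.mem_filter.mp hd).1
        exact Finset.card_lt_card this
      have hgspan : g ∈ Ideal.span S := ih _ hcard' g rfl hgA
      have : f = g + b := by rw [hg]; ring
      rw [this]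
      exact Submodule.add_mem _ hgspan hbspan
  intro f hf
  exact key f.support.card f rfl hf
end
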